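/- The supremum over u ≥ 0 of 2u²·Q(u), where Q(u) = ∫_u^∞ e^{−x²/2}/√(2π) dx is the Gaussian tail function, is a finite positive constant; in particular sup_{u≥0} 2u²Q(u) ≥ 0.33. -/

import Mathlib

open MeasureTheory
open Finset Filter Topology

lemma exp_taylor_lb (t : ℝ) (ht : -27 ≤ t) (ht0 : t ≤ 0) :
    ∑ k ∈ Finset.range 26, t ^ k / (Nat.factorial k : ℝ) ≤ Real.exp t := by
  set S : ℕ → ℝ := fun n => ∑ k ∈ Finset.range n, t ^ k / (Nat.factorial k : ℝ) with hS
  have hpair : ∀ j : ℕ, 13 ≤ j → 0 ≤ t ^ (2*j) / ((2*j).factorial : ℝ)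
      + t ^ (2*j+1) / ((2*j+1).factorial : ℝ) := by
    intro j hj
    have h1 : (0:ℝ) ≤ t ^ (2*j) := (even_two_mul j).pow_nonneg t
    have h2 : t ^ (2*j+1) = t ^ (2*j) * t := by ring
    have hf1 : (0:ℝ) < ((2*j).factorial : ℝ) := by positivity
    have hf2 : ((2*j+1).factorial : ℝ) = ((2*j+1 : ℕ) : ℝ) * ((2*j).factorial : ℝ) := by
      rw [Nat.factorial_succ]; push_cast; ring
    have h27 : (27:ℝ) ≤ ((2*j+1 : ℕ) : ℝ) := by
      have : (27:ℕ) ≤ 2*j+1 := by omega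
      exact_mod_cast this
    have hkey : 0 ≤ 1 / ((2*j).factorial : ℝ) + t / ((2*j+1).factorial : ℝ) := by
      rw [hf2, div_mul_eq_div_div]
      have hc : (0:ℝ) < ((2*j+1:ℕ) : ℝ) := by linarith
      have h5 : (-1:ℝ) ≤ t / ((2*j+1:ℕ):ℝ) := by
        rw [le_div_iff₀ hc]; linarith
      have h6 : 1 / ((2*j).factorial : ℝ) + t / ((2*j+1:ℕ):ℝ) / ((2*j).factorial : ℝ)
          = (1 + t / ((2*j+1:ℕ):ℝ)) / ((2*j).factorial : ℝ) := by ring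
      rw [h6]
      exact div_nonneg (by linarith) hf1.le
    calc (0:ℝ) ≤ t ^ (2*j) * (1 / ((2*j).factorial : ℝ) + t / ((2*j+1).factorial : ℝ)) :=
          mul_nonneg h1 hkey
      _ = t ^ (2*j) / ((2*j).factorial : ℝ) + t ^ (2*j+1) / ((2*j+1).factorial : ℝ) := by
          rw [h2]; ring
  have hmono : ∀ m : ℕ, S 26 ≤ S (26 + 2*m) := by
    intro m
    induction m with
    | zero => simp
    | succ n ih =>
      have : S (26 + 2*(n+1)) = S (26 + 2*n) + (t ^ (2*(13+n)) / ((2*(13+n)).factorial : ℝ)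
          + t ^ (2*(13+n)+1) / ((2*(13+n)+1).factorial : ℝ)) := by
        have e1 : 26 + 2*(n+1) = (26 + 2*n + 1) + 1 := by ring
        have e2 : 26 + 2*n = 2*(13+n) := by ring
        rw [hS]
        simp only [e1, Finset.sum_range_succ]
        rw [e2]
        push_cast
        ring
      rw [this]
      have := hpair (13+n) (by omega)
      linarith
  have hsum : Filter.Tendsto (fun n => S n) atTop (𝓝 (Real.exp t)) := by
    have h := NormedSpace.expSeries_div_hasSum_exp (𝔸 := ℝ) t
    rw [← Real.exp_eq_exp_ℝ] at h
    exact h.tendsto_sum_nat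
  have hsub : Filter.Tendsto (fun m => S (26 + 2*m)) atTop (𝓝 (Real.exp t)) :=
    hsum.comp (Filter.tendsto_atTop_mono (fun m => by simp only [id_eq]; omega) Filter.tendsto_id)
  exact ge_of_tendsto hsub (Filter.Eventually.of_forall hmono)
open Finset intervalIntegral

lemma integral_P :
    (0.2878:ℝ) ≤ ∫ x in (1.2:ℝ)..3.5, ∑ k ∈ Finset.range 26, (-x^2/2)^k / (Nat.factorial k : ℝ) := by
  have hcongr : ∀ x : ℝ, ∑ k ∈ Finset.range 26, (-x^2/2)^k / (Nat.factorial k : ℝ)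
      = ∑ k ∈ Finset.range 26, ((-1:ℝ)^k/(2^k * (Nat.factorial k : ℝ))) * x^(2*k) := by
    intro x
    apply Finset.sum_congr rfl
    intro k _
    rw [show (-x^2/2 : ℝ) = (-1)/2 * x^2 by ring, mul_pow, div_pow, ← pow_mul]
    ring
  rw [intervalIntegral.integral_congr (g := fun x => ∑ k ∈ Finset.range 26,
      ((-1:ℝ)^k/(2^k * (Nat.factorial k : ℝ))) * x^(2*k)) (fun x _ => hcongr x)]
  have hint : ∀ k ∈ Finset.range 26, IntervalIntegrable
      (fun x : ℝ => ((-1:ℝ)^k/(2^k * (Nat.factorial k : ℝ))) * x^(2*k))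
      MeasureTheory.volume 1.2 3.5 :=
    fun k _ => (intervalIntegral.intervalIntegrable_pow (2*k)).const_mul _
  rw [intervalIntegral.integral_finset_sum hint]
  have : ∀ k ∈ Finset.range 26, (∫ x in (1.2:ℝ)..3.5, ((-1:ℝ)^k/(2^k * (Nat.factorial k : ℝ))) * x^(2*k))
      = ((-1:ℝ)^k/(2^k * (Nat.factorial k : ℝ))) * (((3.5:ℝ)^(2*k+1) - (1.2:ℝ)^(2*k+1))/(2*k+1)) := by
    intro k _
    rw [intervalIntegral.integral_const_mul, integral_pow]
    push_cast
    ring_nf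
  rw [Finset.sum_congr rfl this]
  norm_num [Finset.sum_range_succ, Nat.factorial]

lemma gauss_integrable : Integrable (fun x : ℝ => Real.exp (-x ^ 2 / 2) / Real.sqrt (2 * Real.pi)) := by
  have h : (fun x : ℝ => Real.exp (-x ^ 2 / 2) / Real.sqrt (2 * Real.pi))
      = fun x => Real.exp (-(1/2) * x ^ 2) / Real.sqrt (2 * Real.pi) := by
    funext x; rw [show -x^2/2 = -(1/2)*x^2 from by ring]
  rw [h]
  exact (integrable_exp_neg_mul_sq (by norm_num : (0:ℝ) < 1/2)).div_const _

lemma sqrt_two_pi_le : Real.sqrt (2 * Real.pi) ≤ 2.5067 := by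
  have h1 : (2 * Real.pi) ≤ 2.5067 ^ 2 := by nlinarith [Real.pi_lt_d6]
  calc Real.sqrt (2 * Real.pi) ≤ Real.sqrt (2.5067 ^ 2) := Real.sqrt_le_sqrt h1
    _ = 2.5067 := Real.sqrt_sq (by norm_num)

/-- Example 4: the Gaussian constant `sup_{u ≥ 0} 2u²Q(u) ≈ 0.3314` is finite
and at least `0.33`. -/
theorem gaussian_mse_constant (Q : ℝ → ℝ)
    (hQ : ∀ u, Q u = ∫ x in Set.Ioi u, Real.exp (-x ^ 2 / 2) / Real.sqrt (2 * Real.pi)) :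
    BddAbove {y : ℝ | ∃ u ≥ (0:ℝ), y = 2 * u ^ 2 * Q u} ∧
      (0.33 : ℝ) ≤ sSup {y : ℝ | ∃ u ≥ (0:ℝ), y = 2 * u ^ 2 * Q u} := by
  set f : ℝ → ℝ := fun x => Real.exp (-x ^ 2 / 2) / Real.sqrt (2 * Real.pi) with hf
  set g : ℝ → ℝ := fun x => 8 * Real.exp (-(1/4) * x ^ 2) / Real.sqrt (2 * Real.pi) with hg
  have hsqrt_pos : (0:ℝ) < Real.sqrt (2 * Real.pi) :=
    Real.sqrt_pos.mpr (by positivity)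
  have hg_int : Integrable g :=
    (((integrable_exp_neg_mul_sq (by norm_num : (0:ℝ) < 1/4)).const_mul 8).div_const _)
  have hbdd : BddAbove {y : ℝ | ∃ u ≥ (0:ℝ), y = 2 * u ^ 2 * Q u} := by
    refine ⟨∫ x, g x, ?_⟩
    rintro y ⟨u, hu, rfl⟩
    rw [hQ u]
    have h1 : 2 * u ^ 2 * ∫ x in Set.Ioi u, f x = ∫ x in Set.Ioi u, 2 * u ^ 2 * f x :=
      (MeasureTheory.integral_const_mul _ _).symm
    rw [h1]
    have h2 : ∫ x in Set.Ioi u, 2 * u ^ 2 * f x ≤ ∫ x in Set.Ioi u, g x := by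
      apply setIntegral_mono_on
      · exact (gauss_integrable.integrableOn).const_mul _
      · exact hg_int.integrableOn
      · exact measurableSet_Ioi
      · intro x hx
        have hux : u < x := hx
        have hx2 : u ^ 2 ≤ x ^ 2 := by nlinarith
        have hu4 : u ^ 2 ≤ 4 * Real.exp (x ^ 2 / 4) := by
          have ha : u ^ 2 / 4 + 1 ≤ Real.exp (u ^ 2 / 4) := Real.add_one_le_exp _
          have hb : Real.exp (u ^ 2 / 4) ≤ Real.exp (x ^ 2 / 4) :=
            Real.exp_le_exp.mpr (by linarith)
          nlinarith [Real.exp_pos (u ^ 2 / 4)]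
        have hkey : 2 * u ^ 2 * Real.exp (-x ^ 2 / 2) ≤ 8 * Real.exp (-(1/4) * x ^ 2) := by
          have hmul : Real.exp (x ^ 2 / 4) * Real.exp (-x ^ 2 / 2) = Real.exp (-(1/4) * x ^ 2) := by
            rw [← Real.exp_add]; congr 1; ring
          have := mul_le_mul_of_nonneg_right hu4 (Real.exp_pos (-x ^ 2 / 2)).le
          calc 2 * u ^ 2 * Real.exp (-x ^ 2 / 2)
              ≤ 2 * (4 * Real.exp (x ^ 2 / 4)) * Real.exp (-x ^ 2 / 2) := by nlinarith [Real.exp_pos (-x^2/2)]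
            _ = 8 * (Real.exp (x ^ 2 / 4) * Real.exp (-x ^ 2 / 2)) := by ring
            _ = 8 * Real.exp (-(1/4) * x ^ 2) := by rw [hmul]
        show 2 * u ^ 2 * (Real.exp (-x ^ 2 / 2) / Real.sqrt (2 * Real.pi))
            ≤ 8 * Real.exp (-(1/4) * x ^ 2) / Real.sqrt (2 * Real.pi)
        rw [mul_div_assoc' ]
        exact div_le_div_of_nonneg_right hkey hsqrt_pos.le |>.trans_eq rfl
    have h3 : ∫ x in Set.Ioi u, g x ≤ ∫ x, g x := by
      apply setIntegral_le_integral hg_int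
      filter_upwards with x
      have := Real.exp_pos (-(1/4) * x ^ 2)
      positivity
    linarith
  refine ⟨hbdd, ?_⟩
  have hmem : 2 * (1.2:ℝ) ^ 2 * Q 1.2 ∈ {y : ℝ | ∃ u ≥ (0:ℝ), y = 2 * u ^ 2 * Q u} :=
    ⟨1.2, by norm_num, rfl⟩
  refine le_trans ?_ (le_csSup hbdd hmem)
  -- Lower bound on Q 1.2
  have hP_int : IntervalIntegrable (fun x : ℝ => (∑ k ∈ Finset.range 26,
      (-x^2/2)^k / (Nat.factorial k : ℝ)) / Real.sqrt (2 * Real.pi)) volume 1.2 3.5 := by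
    apply Continuous.intervalIntegrable
    apply Continuous.div_const
    apply continuous_finset_sum
    intro k _
    exact (((continuous_pow 2).neg.div_const 2).pow k).div_const _
  have hf_int : IntervalIntegrable f volume 1.2 3.5 := gauss_integrable.intervalIntegrable
  have hmono : ∫ x in (1.2:ℝ)..3.5, (∑ k ∈ Finset.range 26,
      (-x^2/2)^k / (Nat.factorial k : ℝ)) / Real.sqrt (2 * Real.pi)
      ≤ ∫ x in (1.2:ℝ)..3.5, f x := by
    apply intervalIntegral.integral_mono_on (by norm_num) hP_int hf_int
    intro x hx
    rw [Set.mem_Icc] at hx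
    have hxt : -27 ≤ -x^2/2 := by nlinarith [hx.1, hx.2]
    have hxt0 : -x^2/2 ≤ 0 := by nlinarith [hx.1]
    have := exp_taylor_lb (-x^2/2) hxt hxt0
    rw [hf]
    exact div_le_div_of_nonneg_right this hsqrt_pos.le
  have hIoc : ∫ x in (1.2:ℝ)..3.5, f x = ∫ x in Set.Ioc (1.2:ℝ) 3.5, f x :=
    intervalIntegral.integral_of_le (by norm_num)
  have hsubset : ∫ x in Set.Ioc (1.2:ℝ) 3.5, f x ≤ ∫ x in Set.Ioi (1.2:ℝ), f x := by
    apply setIntegral_mono_set gauss_integrable.integrableOn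
    · filter_upwards with x
      have := Real.exp_pos (-x^2/2)
      simp only [Pi.zero_apply, hf]
      positivity
    · exact HasSubset.Subset.eventuallyLE Set.Ioc_subset_Ioi_self
  have hdiv : ∫ x in (1.2:ℝ)..3.5, (∑ k ∈ Finset.range 26,
      (-x^2/2)^k / (Nat.factorial k : ℝ)) / Real.sqrt (2 * Real.pi)
      = (∫ x in (1.2:ℝ)..3.5, ∑ k ∈ Finset.range 26,
        (-x^2/2)^k / (Nat.factorial k : ℝ)) / Real.sqrt (2 * Real.pi) :=
    intervalIntegral.integral_div _ _
  have hQlb : (0.2878:ℝ) / 2.5067 ≤ Q 1.2 := by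
    rw [hQ]
    have h5 : (0.2878:ℝ) / 2.5067 ≤ (∫ x in (1.2:ℝ)..3.5, ∑ k ∈ Finset.range 26,
        (-x^2/2)^k / (Nat.factorial k : ℝ)) / Real.sqrt (2 * Real.pi) := by
      apply div_le_div₀ (le_trans (by norm_num) integral_P) integral_P hsqrt_pos sqrt_two_pi_le
    calc (0.2878:ℝ) / 2.5067 ≤ _ := h5
      _ = ∫ x in (1.2:ℝ)..3.5, (∑ k ∈ Finset.range 26,
          (-x^2/2)^k / (Nat.factorial k : ℝ)) / Real.sqrt (2 * Real.pi) := hdiv.symm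
      _ ≤ ∫ x in (1.2:ℝ)..3.5, f x := hmono
      _ = ∫ x in Set.Ioc (1.2:ℝ) 3.5, f x := hIoc
      _ ≤ ∫ x in Set.Ioi (1.2:ℝ), f x := hsubset
  calc (0.33:ℝ) ≤ 2 * (1.2:ℝ)^2 * (0.2878 / 2.5067) := by norm_num
    _ ≤ 2 * (1.2:ℝ)^2 * Q 1.2 := by nlinarith [hQlb]
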